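/- Fix k ≥ 2 and n ≥ 2k, and let k ≤ m ≤ n−k. The number of sets of cardinality m in the k-interval chain C_k^0 whose indicator vector has at least j zeros before its last 1 is Σ_{h=j}^{k−1} C(k−1, h). -/

import Mathlib

/-- The initial segment `{1,…,i}` of `[n]`, as a subset of `Fin n`. -/
def initSeg (n i : ℕ) : Finset (Fin n) := Finset.univ.filter (fun x => (x : ℕ) < i)

/-- The `k`-interval chain `C_k^0 = ⋃_{i=0}^{n-k} [[i],[i+k]]`. -/
def intervalChain (n k : ℕ) : Finset (Finset (Fin n)) :=
  (Finset.range (n - k + 1)).biUnion (fun i => Finset.Icc (initSeg n i) (initSeg n (i + k)))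

/-- The number of zeros before the last 1 in the indicator vector of `A`: the number of
elements not in `A` that are smaller than some element of `A`. -/
def zerosBeforeLastOne {n : ℕ} (A : Finset (Fin n)) : ℕ :=
  (Finset.univ.filter (fun x => x ∉ A ∧ ∃ y ∈ A, x < y)).card

lemma mem_initSeg {n i : ℕ} {x : Fin n} : x ∈ initSeg n i ↔ (x : ℕ) < i := by
  simp [initSeg]

lemma initSeg_card {n i : ℕ} (h : i ≤ n) : (initSeg n i).card = i := by
  rw [show initSeg n i = Finset.attachFin (Finset.range i)
      (fun m hm => lt_of_lt_of_le (Finset.mem_range.mp hm) h) from ?_]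
  · exact (Finset.card_attachFin _ _).trans (Finset.card_range i)
  · ext x; simp [initSeg, Finset.mem_attachFin]

lemma initSeg_mono {n i j : ℕ} (h : i ≤ j) : initSeg n i ⊆ initSeg n j := by
  intro x hx; rw [mem_initSeg] at hx ⊢; omega

lemma mem_intervalChain {n k : ℕ} {A : Finset (Fin n)} :
    A ∈ intervalChain n k ↔ ∃ i, i < n - k + 1 ∧ initSeg n i ⊆ A ∧ A ⊆ initSeg n (i + k) := by
  simp [intervalChain, Finset.mem_biUnion, Finset.mem_Icc, Finset.mem_range]

lemma zeros_eq_of_max {n : ℕ} {A : Finset (Fin n)} {L : Fin n} (hL : L ∈ A)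
    (hmax : ∀ y ∈ A, y ≤ L) :
    zerosBeforeLastOne A = (L : ℕ) + 1 - A.card := by
  have hset : Finset.univ.filter (fun x => x ∉ A ∧ ∃ y ∈ A, x < y)
      = initSeg n (L : ℕ) \ A.erase L := by
    ext x
    simp only [Finset.mem_filter, Finset.mem_univ, true_and, Finset.mem_sdiff,
      mem_initSeg, Finset.mem_erase, not_and]
    constructor
    · rintro ⟨hxA, y, hyA, hxy⟩
      have hxL : x < L := lt_of_lt_of_le hxy (hmax y hyA)
      exact ⟨hxL, fun _ hxA' => absurd hxA' hxA⟩
    · rintro ⟨hxL, hx⟩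
      have hxlt : x < L := hxL
      have hxne : x ≠ L := Fin.ne_of_lt hxlt
      exact ⟨fun hxA => (hx hxne hxA), L, hL, hxlt⟩
  have hsub : A.erase L ⊆ initSeg n (L : ℕ) := by
    intro y hy
    rw [Finset.mem_erase] at hy
    rw [mem_initSeg]
    have := hmax y hy.2
    have : (y : ℕ) ≤ (L : ℕ) := this
    have hne : (y : ℕ) ≠ (L : ℕ) := fun h => hy.1 (Fin.ext h)
    omega
  have hcard : 1 ≤ A.card := Finset.card_pos.mpr ⟨L, hL⟩
  rw [zerosBeforeLastOne, hset, Finset.card_sdiff_of_subset hsub, Finset.card_erase_of_mem hL,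
    initSeg_card (le_of_lt L.isLt)]
  omega

lemma zeros_le {n k : ℕ} (hk : 1 ≤ k) (hkn : k ≤ n) {A : Finset (Fin n)} (hA : A ∈ intervalChain n k) :
    zerosBeforeLastOne A ≤ k - 1 := by
  obtain ⟨i, hi, h1, h2⟩ := mem_intervalChain.mp hA
  have hik : i + k ≤ n := by omega
  have hsub : Finset.univ.filter (fun x => x ∉ A ∧ ∃ y ∈ A, x < y)
      ⊆ initSeg n (i + k - 1) \ initSeg n i := by
    intro x hx
    simp only [Finset.mem_filter, Finset.mem_univ, true_and] at hx
    obtain ⟨hxA, y, hyA, hxy⟩ := hx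
    have hy : (y : ℕ) < i + k := mem_initSeg.mp (h2 hyA)
    have hxy' : (x : ℕ) < (y : ℕ) := hxy
    rw [Finset.mem_sdiff, mem_initSeg, mem_initSeg]
    constructor
    · omega
    · intro hxi
      exact hxA (h1 (mem_initSeg.mpr hxi))
  have := Finset.card_le_card hsub
  have hc : (initSeg n (i + k - 1) \ initSeg n i).card ≤ k - 1 := by
    rw [Finset.card_sdiff_of_subset (initSeg_mono (show i ≤ i + k - 1 by omega))]
    have e1 : (initSeg n (i + k - 1)).card = i + k - 1 := initSeg_card (by omega)
    have e2 : (initSeg n i).card = i := initSeg_card (by omega)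
    rw [e1, e2]
    omega
  calc zerosBeforeLastOne A ≤ _ := this
    _ ≤ k - 1 := hc

lemma key_count (n k m z : ℕ) (hk : 2 ≤ k) (hn : 2 * k ≤ n)
    (hm₁ : k ≤ m) (hm₂ : m ≤ n - k) (hz : z ≤ k - 1) :
    ((intervalChain n k).filter (fun A => A.card = m ∧ zerosBeforeLastOne A = z)).card
      = Nat.choose (k - 1) z := by
  have hkn : k ≤ n := by omega
  have hmzn : m + z ≤ n - 1 := by omega
  have hn1 : 1 ≤ n := by omega
  set W : Finset (Fin n) := initSeg n (m + z - 1) \ initSeg n (m + z - k) with hW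
  have hWcard : W.card = k - 1 := by
    rw [hW, Finset.card_sdiff_of_subset (initSeg_mono (show m + z - k ≤ m + z - 1 by omega)),
      initSeg_card (by omega), initSeg_card (by omega)]
    omega
  -- characterization of members of the filter
  have hmem : ∀ A ∈ (intervalChain n k).filter
      (fun A => A.card = m ∧ zerosBeforeLastOne A = z),
      A ⊆ initSeg n (m + z) ∧ (initSeg n (m + z) \ A) ∈ W.powersetCard z := by
    intro A hA
    rw [Finset.mem_filter] at hA
    obtain ⟨hchain, hcard, hzeros⟩ := hA
    obtain ⟨i, hi, h1, h2⟩ := mem_intervalChain.mp hchain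
    have hne : A.Nonempty := Finset.card_pos.mp (by omega)
    set L := A.max' hne with hL
    have hLA : L ∈ A := A.max'_mem hne
    have hmax : ∀ y ∈ A, y ≤ L := fun y hy => A.le_max' y hy
    have hzL : z = (L : ℕ) + 1 - m := by
      rw [← hzeros, zeros_eq_of_max hLA hmax, hcard]
    have hmL : m ≤ (L : ℕ) + 1 := by
      have : A ⊆ initSeg n ((L : ℕ) + 1) := by
        intro y hy; rw [mem_initSeg]
        exact Nat.lt_succ_of_le (hmax y hy)
      have := Finset.card_le_card this
      rw [hcard, initSeg_card (by omega)] at this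
      exact this
    have hLval : (L : ℕ) = m + z - 1 := by omega
    have hAsub : A ⊆ initSeg n (m + z) := by
      intro y hy; rw [mem_initSeg]
      have := hmax y hy
      have : (y : ℕ) ≤ (L : ℕ) := this
      omega
    refine ⟨hAsub, ?_⟩
    rw [Finset.mem_powersetCard]
    have hiL : m + z - k ≤ i := by
      have : (L : ℕ) < i + k := mem_initSeg.mp (h2 hLA)
      omega
    constructor
    · intro x hx
      rw [Finset.mem_sdiff, mem_initSeg] at hx
      obtain ⟨hx1, hx2⟩ := hx
      rw [hW, Finset.mem_sdiff, mem_initSeg, mem_initSeg]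
      have hxi : i ≤ (x : ℕ) := by
        by_contra h
        exact hx2 (h1 (mem_initSeg.mpr (by omega)))
      have hxne : x ≠ L := fun h => hx2 (h ▸ hLA)
      have : (x : ℕ) ≠ (L : ℕ) := fun h => hxne (Fin.ext h)
      omega
    · rw [Finset.card_sdiff_of_subset hAsub, hcard, initSeg_card (by omega)]
      omega
  have hbij : ((intervalChain n k).filter
      (fun A => A.card = m ∧ zerosBeforeLastOne A = z)).card = (W.powersetCard z).card := by
    refine Finset.card_nbij' (fun A => initSeg n (m + z) \ A)
      (fun Z => initSeg n (m + z) \ Z) ?_ ?_ ?_ ?_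
    · intro A hA; exact (hmem A hA).2
    · -- backward map lands in the filter
      intro Z hZ
      rw [Finset.mem_coe, Finset.mem_powersetCard] at hZ
      obtain ⟨hZW, hZcard⟩ := hZ
      have hZsub : Z ⊆ initSeg n (m + z) := fun x hx => by
        have := hZW hx
        rw [hW, Finset.mem_sdiff, mem_initSeg] at this
        rw [mem_initSeg]; omega
      rw [Finset.mem_coe, Finset.mem_filter]
      have hAcard : (initSeg n (m + z) \ Z).card = m := by
        rw [Finset.card_sdiff_of_subset hZsub, initSeg_card (by omega), hZcard]; omega
      refine ⟨?_, hAcard, ?_⟩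
      · rw [mem_intervalChain]
        refine ⟨m + z - k, by omega, ?_, ?_⟩
        · intro x hx
          rw [mem_initSeg] at hx
          rw [Finset.mem_sdiff, mem_initSeg]
          refine ⟨by omega, fun hxZ => ?_⟩
          have := hZW hxZ
          rw [hW, Finset.mem_sdiff, mem_initSeg, mem_initSeg] at this
          omega
        · intro x hx
          rw [Finset.mem_sdiff, mem_initSeg] at hx
          rw [mem_initSeg]
          omega
      · -- zeros = z
        have hLlt : m + z - 1 < n := by omega
        set L : Fin n := ⟨m + z - 1, hLlt⟩ with hLdef
        have hLA : L ∈ initSeg n (m + z) \ Z := by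
          rw [Finset.mem_sdiff, mem_initSeg]
          refine ⟨by simp [hLdef]; omega, fun hLZ => ?_⟩
          have := hZW hLZ
          rw [hW, Finset.mem_sdiff, mem_initSeg] at this
          simp [hLdef] at this
        have hmax : ∀ y ∈ initSeg n (m + z) \ Z, y ≤ L := by
          intro y hy
          rw [Finset.mem_sdiff, mem_initSeg] at hy
          have : (y : ℕ) ≤ m + z - 1 := by omega
          exact this
        rw [zeros_eq_of_max hLA hmax, hAcard]
        simp [hLdef]
        omega
    · intro A hA
      have := (hmem A hA).1
      show initSeg n (m + z) \ (initSeg n (m + z) \ A) = A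
      rw [Finset.sdiff_sdiff_self_left]
      exact Finset.inter_eq_right.mpr this
    · intro Z hZ
      rw [Finset.mem_coe, Finset.mem_powersetCard] at hZ
      have hZsub : Z ⊆ initSeg n (m + z) := fun x hx => by
        have := hZ.1 hx
        rw [hW, Finset.mem_sdiff, mem_initSeg] at this
        rw [mem_initSeg]; omega
      show initSeg n (m + z) \ (initSeg n (m + z) \ Z) = Z
      rw [Finset.sdiff_sdiff_self_left]
      exact Finset.inter_eq_right.mpr hZsub
  rw [hbij, Finset.card_powersetCard, hWcard]

/-- For `k ≤ m ≤ n-k`, the number of sets of cardinality `m` in the `k`-interval chain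
having at least `j` zeros before the last 1 is `Σ_{h=j}^{k-1} C(k-1,h)`. -/
theorem intervalChain_level_card_many_zeros (n k m j : ℕ) (hk : 2 ≤ k) (hn : 2 * k ≤ n)
    (hm₁ : k ≤ m) (hm₂ : m ≤ n - k) :
    ((intervalChain n k).filter (fun A => A.card = m ∧ j ≤ zerosBeforeLastOne A)).card
      = ∑ h ∈ Finset.Icc j (k - 1), Nat.choose (k - 1) h := by
  have hkn : k ≤ n := by omega
  have hsplit : (intervalChain n k).filter (fun A => A.card = m ∧ j ≤ zerosBeforeLastOne A)
      = (Finset.Icc j (k - 1)).biUnion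
        (fun z => (intervalChain n k).filter
          (fun A => A.card = m ∧ zerosBeforeLastOne A = z)) := by
    ext A
    simp only [Finset.mem_filter, Finset.mem_biUnion, Finset.mem_Icc]
    constructor
    · rintro ⟨hA, hcard, hj⟩
      exact ⟨zerosBeforeLastOne A, ⟨hj, zeros_le (by omega) hkn hA⟩, hA, hcard, rfl⟩
    · rintro ⟨z, ⟨hjz, _⟩, hA, hcard, hz⟩
      exact ⟨hA, hcard, hz ▸ hjz⟩
  rw [hsplit, Finset.card_biUnion]
  · refine Finset.sum_congr rfl ?_
    intro z hz
    rw [Finset.mem_Icc] at hz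
    exact key_count n k m z hk hn hm₁ hm₂ hz.2
  · intro x _ y _ hxy
    rw [Function.onFun, Finset.disjoint_left]
    intro A hA hA'
    rw [Finset.mem_filter] at hA hA'
    exact hxy (hA.2.2.symm.trans hA'.2.2)
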